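/- Let P̄* ∈ ℝ^{n×r} have smallest singular value squared σ_r* (i.e., σ_r* = λ_r(P̄*ᵀP̄*)) and let Δ ∈ ℝ^{n×r} satisfy ΔᵀP̄* = P̄*ᵀΔ (symmetric cross term). Then ‖ΔP̄*ᵀ + P̄*Δᵀ‖_F² ≥ 2σ_r*·‖Δ‖_F². -/

import Mathlib

open Matrix

private lemma frob {n m : ℕ} (M : Matrix (Fin n) (Fin m) ℝ) :
    Matrix.trace (Mᵀ * M) = ∑ i, ∑ j, M i j ^ 2 := by
  simp only [Matrix.trace, Matrix.diag, Matrix.mul_apply, Matrix.transpose_apply, ← sq]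
  exact Finset.sum_comm

private lemma trace_psd_mul_nonneg {m : ℕ} {A B : Matrix (Fin m) (Fin m) ℝ}
    (hA : A.PosSemidef) (hB : B.PosSemidef) : 0 ≤ Matrix.trace (A * B) := by
  obtain ⟨C, hC⟩ : ∃ C : Matrix (Fin m) (Fin m) ℝ, A = Cᴴ * C := by
    open scoped MatrixOrder in
    exact CStarAlgebra.nonneg_iff_eq_star_mul_self.mp hA.nonneg
  obtain ⟨D, hD⟩ : ∃ D : Matrix (Fin m) (Fin m) ℝ, B = Dᴴ * D := by
    open scoped MatrixOrder in
    exact CStarAlgebra.nonneg_iff_eq_star_mul_self.mp hB.nonneg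
  rw [hC, hD, Matrix.conjTranspose_eq_transpose_of_trivial,
    Matrix.conjTranspose_eq_transpose_of_trivial]
  have key : Matrix.trace (Cᵀ * C * (Dᵀ * D)) = Matrix.trace ((C * Dᵀ)ᵀ * (C * Dᵀ)) := by
    rw [Matrix.transpose_mul, Matrix.transpose_transpose, ← Matrix.mul_assoc,
      Matrix.trace_mul_comm (Cᵀ * C * Dᵀ) D, ← Matrix.mul_assoc, ← Matrix.mul_assoc,
      Matrix.mul_assoc (D * Cᵀ) C Dᵀ]
  rw [key, frob]
  positivity

private lemma psd_sub_iInf {r : ℕ} [NeZero r] {A : Matrix (Fin r) (Fin r) ℝ}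
    (hA : A.IsHermitian) : (A - (⨅ i, hA.eigenvalues i) • 1).PosSemidef := by
  set σ := ⨅ i, hA.eigenvalues i with hσdef
  have hσle : ∀ i, σ ≤ hA.eigenvalues i := fun i =>
    ciInf_le (Set.Finite.bddBelow (Set.finite_range _)) i
  have hd : (Matrix.diagonal (fun i => hA.eigenvalues i - σ)).PosSemidef :=
    Matrix.posSemidef_diagonal_iff.mpr fun i => sub_nonneg.mpr (hσle i)
  have h2 := hd.mul_mul_conjTranspose_same (hA.eigenvectorUnitary : Matrix (Fin r) (Fin r) ℝ)
  convert h2 using 1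
  have hU : (hA.eigenvectorUnitary : Matrix (Fin r) (Fin r) ℝ) *
      star (hA.eigenvectorUnitary : Matrix (Fin r) (Fin r) ℝ) = 1 :=
    Matrix.mem_unitaryGroup_iff.mp hA.eigenvectorUnitary.2
  have hspec := hA.spectral_theorem
  have e0 : (RCLike.ofReal ∘ hA.eigenvalues : Fin r → ℝ) = hA.eigenvalues := by
    ext i; simp
  rw [e0] at hspec
  simp only [Unitary.conjStarAlgAut_apply, Matrix.star_eq_conjTranspose] at hU hspec
  have e1 : Matrix.diagonal (fun i : Fin r => hA.eigenvalues i - σ) =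
      Matrix.diagonal hA.eigenvalues - σ • 1 := by
    rw [Matrix.smul_one_eq_diagonal, ← Matrix.diagonal_sub]
  rw [e1, Matrix.mul_sub, Matrix.sub_mul, Matrix.mul_smul, Matrix.mul_one,
    Matrix.smul_mul, hU, ← hspec]

/-- If `ΔᵀP̄*` is symmetric then `‖ΔP̄*ᵀ + P̄*Δᵀ‖_F² ≥ 2 σ_r* ‖Δ‖_F²`, where `σ_r*`
is the smallest eigenvalue of `P̄*ᵀP̄*`. -/
theorem tangent_lower_bound (n r : ℕ) (Pb Δ : Matrix (Fin n) (Fin r) ℝ)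
    (hsymm : Δᵀ * Pb = Pbᵀ * Δ) :
    2 * (⨅ i, (Matrix.isHermitian_conjTranspose_mul_self Pb).eigenvalues i) *
        (∑ i, ∑ k, Δ i k ^ 2) ≤
      ∑ i, ∑ j, (Δ * Pbᵀ + Pb * Δᵀ) i j ^ 2 := by
  rcases Nat.eq_zero_or_pos r with hr | hr
  · subst hr
    have h0 : (∑ i, ∑ k : Fin 0, Δ i k ^ 2) = 0 := by simp
    rw [h0, mul_zero]
    positivity
  · haveI : NeZero r := ⟨hr.ne'⟩
    set σ := ⨅ i, (Matrix.isHermitian_conjTranspose_mul_self Pb).eigenvalues i with hσ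
    set M := Δ * Pbᵀ + Pb * Δᵀ with hM
    set N := Pbᵀ * Δ with hNdef
    have hNs : Nᵀ = N := by
      rw [hNdef, Matrix.transpose_mul, Matrix.transpose_transpose, hsymm]
    have hpsd := psd_sub_iInf (Matrix.isHermitian_conjTranspose_mul_self Pb)
    have h1 : 0 ≤ Matrix.trace ((Δᴴ * Δ) * (Pbᴴ * Pb - σ • 1)) :=
      trace_psd_mul_nonneg (Matrix.posSemidef_conjTranspose_mul_self Δ) hpsd
    rw [Matrix.conjTranspose_eq_transpose_of_trivial,
      Matrix.conjTranspose_eq_transpose_of_trivial] at h1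
    have h2 : Matrix.trace ((Δᵀ * Δ) * (Pbᵀ * Pb - σ • 1)) =
        Matrix.trace (Δᵀ * Δ * (Pbᵀ * Pb)) - σ * Matrix.trace (Δᵀ * Δ) := by
      rw [Matrix.mul_sub, Matrix.trace_sub, Matrix.mul_smul, Matrix.mul_one,
        Matrix.trace_smul, smul_eq_mul]
    have hΔ : Matrix.trace (Δᵀ * Δ) = ∑ i, ∑ k, Δ i k ^ 2 := frob Δ
    have hMt : Mᵀ = M := by
      rw [hM, Matrix.transpose_add, Matrix.transpose_mul, Matrix.transpose_mul,
        Matrix.transpose_transpose, Matrix.transpose_transpose, add_comm]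
    have hRHS : (∑ i, ∑ j, M i j ^ 2) = Matrix.trace (M * M) := by
      rw [← frob M, hMt]
    have ht1 : Matrix.trace (Δ * Pbᵀ * (Δ * Pbᵀ)) = Matrix.trace (Nᵀ * N) := by
      rw [Matrix.trace_mul_cycle Δ Pbᵀ (Δ * Pbᵀ),
        Matrix.trace_mul_cycle (Δ * Pbᵀ) Δ Pbᵀ,
        ← Matrix.mul_assoc Pbᵀ Δ Pbᵀ, Matrix.mul_assoc (Pbᵀ * Δ) Pbᵀ Δ]
      nth_rewrite 1 [← hNs]
      rfl
    have ht4 : Matrix.trace (Pb * Δᵀ * (Pb * Δᵀ)) = Matrix.trace (Nᵀ * N) := by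
      rw [Matrix.trace_mul_cycle Pb Δᵀ (Pb * Δᵀ),
        Matrix.trace_mul_cycle (Pb * Δᵀ) Pb Δᵀ,
        ← Matrix.mul_assoc Δᵀ Pb Δᵀ, Matrix.mul_assoc (Δᵀ * Pb) Δᵀ Pb, hsymm]
      nth_rewrite 1 [← hNs]
      rfl
    have ht2 : Matrix.trace (Δ * Pbᵀ * (Pb * Δᵀ)) = Matrix.trace (Δᵀ * Δ * (Pbᵀ * Pb)) := by
      rw [Matrix.mul_assoc Δ Pbᵀ (Pb * Δᵀ), Matrix.trace_mul_comm Δ (Pbᵀ * (Pb * Δᵀ)),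
        ← Matrix.mul_assoc Pbᵀ Pb Δᵀ, Matrix.mul_assoc (Pbᵀ * Pb) Δᵀ Δ,
        Matrix.trace_mul_comm (Pbᵀ * Pb) (Δᵀ * Δ)]
    have ht3 : Matrix.trace (Pb * Δᵀ * (Δ * Pbᵀ)) = Matrix.trace (Δᵀ * Δ * (Pbᵀ * Pb)) := by
      rw [Matrix.mul_assoc Pb Δᵀ (Δ * Pbᵀ), Matrix.trace_mul_comm Pb (Δᵀ * (Δ * Pbᵀ)),
        ← Matrix.mul_assoc Δᵀ Δ Pbᵀ, Matrix.mul_assoc (Δᵀ * Δ) Pbᵀ Pb]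
    have hexp : Matrix.trace (M * M) =
        Matrix.trace (Δ * Pbᵀ * (Δ * Pbᵀ)) + Matrix.trace (Δ * Pbᵀ * (Pb * Δᵀ)) +
          (Matrix.trace (Pb * Δᵀ * (Δ * Pbᵀ)) + Matrix.trace (Pb * Δᵀ * (Pb * Δᵀ))) := by
      rw [hM, Matrix.add_mul, Matrix.mul_add, Matrix.mul_add, Matrix.trace_add,
        Matrix.trace_add, Matrix.trace_add]
    have hNpos : 0 ≤ Matrix.trace (Nᵀ * N) := by
      rw [frob]; positivity
    rw [hRHS, hexp, ht1, ht2, ht3, ht4]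
    rw [h2, hΔ] at h1
    linarith
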